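/- arXiv:1808.09003 — 2 statements merged into one kernel-verified Lean document; each statement's English description precedes it below -/
import Mathlib

section
/- In a (possibly noncommutative) ring R of prime characteristic p, for any element a the p-th power of the inner derivation δ_a(b) = ba - ab equals the inner derivation of a^p; that is, δ_a^p(b) = b·a^p - a^p·b for all b in R. -/
/-- The ring of additive endomorphisms of a ring of characteristic `p`
also has characteristic `p`. -/
private lemma addMonoidEnd_charP {R : Type*} [Ring R] (p : ℕ) [CharP R p] :
    CharP (AddMonoid.End R) p := by
  have h2 : ∀ m : ℕ, ∀ x : R, ((m : AddMonoid.End R)) x = (m : R) * x := by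
    intro m
    induction m with
    | zero => intro x; simp
    | succ m ih =>
      intro x
      push_cast
      rw [show ((m : AddMonoid.End R) + 1) x = (m : AddMonoid.End R) x + (1 : AddMonoid.End R) x from rfl, ih, add_mul, one_mul]
      rfl
  constructor
  intro n
  constructor
  · intro h
    have h1 : ((n : AddMonoid.End R)) (1 : R) = 0 := by rw [h]; rfl
    rw [h2, mul_one] at h1
    exact (CharP.cast_eq_zero_iff R p n).mp h1
  · intro h
    refine AddMonoid.End.ext (h := fun x => ?_)
    rw [h2, (CharP.cast_eq_zero_iff R p n).mpr h, zero_mul]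
    rfl

/-- In a ring `R` of prime characteristic `p`, the `p`-th iterate of the inner
derivation `δ_a (b) = b * a - a * b` is the inner derivation of `a ^ p`. -/
theorem inner_derivation_pow_char {R : Type*} [Ring R] (p : ℕ) [Fact p.Prime]
    [CharP R p] (a b : R) :
    (fun c : R => c * a - a * c)^[p] b = b * a ^ p - a ^ p * b := by
  have : CharP (AddMonoid.End R) p := addMonoidEnd_charP p
  let L : AddMonoid.End R := AddMonoidHom.mulLeft a
  let Rm : AddMonoid.End R := AddMonoidHom.mulRight a
  have hcomm : Commute Rm L := by
    refine AddMonoidHom.ext fun x => ?_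
    show a * x * a = a * (x * a)
    exact mul_assoc a x a
  have key : (Rm - L) ^ p = Rm ^ p - L ^ p := sub_pow_char_of_commute p hcomm
  have hRm : ∀ n : ℕ, ∀ x : R, (Rm ^ n) x = x * a ^ n := fun n => by
    induction n with
    | zero => intro x; simp
    | succ n ih =>
      intro x
      rw [pow_succ']
      show ((Rm ^ n) x) * a = x * a ^ (n + 1)
      rw [ih, mul_assoc, ← pow_succ]
  have hL : ∀ n : ℕ, ∀ x : R, (L ^ n) x = a ^ n * x := fun n => by
    induction n with
    | zero => intro x; simp
    | succ n ih =>
      intro x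
      rw [pow_succ]
      show (L ^ n) (a * x) = a ^ (n + 1) * x
      rw [ih, ← mul_assoc, ← pow_succ]
  have hfun : (fun c : R => c * a - a * c) = ⇑(Rm - L) := by
    funext c
    show c * a - a * c = Rm c - L c
    rfl
  rw [hfun, ← AddMonoid.End.coe_pow, key]
  show (Rm ^ p) b - (L ^ p) b = _
  rw [hRm, hL]
end

section
/- Let A = k[x][y; δ] be a differential operator ring with δ(x) = p(x) ∈ k[x], and let φ be defined on generators by φ(x) = λx + κ and φ(y) = μy + h(x) with λ, μ ∈ k^×, κ ∈ k, h(x) ∈ k[x]. Then φ extends to an algebra endomorphism of A if and only if p(λx + κ) = λμ·p(x). -/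
open FreeAlgebra Polynomial

/-- The defining relation of `A = k[x][y;δ]` with `δ(x) = p(x)`:
`y·x = x·y + p(x)` (generators `0 ↦ x`, `1 ↦ y`). -/
inductive DiffOpRel (k : Type*) [CommRing k] (p : Polynomial k) :
    FreeAlgebra k (Fin 2) → FreeAlgebra k (Fin 2) → Prop
  | rel : DiffOpRel k p (ι k 1 * ι k 0)
      (ι k 0 * ι k 1 + Polynomial.aeval (ι k 0) p)

/-- The differential operator ring `k[x][y;δ]`, `δ(x) = p(x)`. -/
abbrev DiffOpRing (k : Type*) [CommRing k] (p : Polynomial k) :=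
  RingQuot (DiffOpRel k p)

section Aux

variable {k : Type*} [Field k] (p : Polynomial k)

/-- left multiplication algebra hom on `k[x]`. -/
noncomputable abbrev Mop : Polynomial k →ₐ[k] Module.End k (Polynomial k) :=
  Algebra.lmul k (Polynomial k)

lemma Mop_apply (q f : Polynomial k) : Mop q f = q * f := rfl

/-- derivation `f ↦ p * f'` as an endomorphism. -/
noncomputable def Dop : Module.End k (Polynomial k) :=
  Mop p * (Polynomial.derivative : Polynomial k →ₗ[k] Polynomial k)

lemma Dop_apply (f : Polynomial k) : Dop p f = p * derivative f := rfl

lemma aeval_Mop (q r : Polynomial k) : aeval (Mop (k := k) q) r = Mop (r.comp q) := by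
  have := Polynomial.aeval_algHom_apply (Mop (k := k)) q r
  rw [comp_eq_aeval]
  exact this

lemma Dop_mul_MX : Dop p * Mop Polynomial.X = Mop Polynomial.X * Dop p + Mop p := by
  apply LinearMap.ext; intro f
  simp only [Module.End.mul_apply, LinearMap.add_apply, Mop_apply, Dop_apply,
    derivative_mul, derivative_X]
  ring

/-- the representation of `DiffOpRing k p` on `k[x]`. -/
noncomputable def psi : DiffOpRing k p →ₐ[k] Module.End k (Polynomial k) :=
  RingQuot.liftAlgHom k ⟨FreeAlgebra.lift k ![Mop Polynomial.X, Dop p], by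
    rintro a b ⟨⟩
    simp only [map_mul, map_add, FreeAlgebra.lift_ι_apply,
      Matrix.cons_val_zero, Matrix.cons_val_one, Matrix.head_cons,
      ← Polynomial.aeval_algHom_apply, aeval_Mop, comp_X]
    rw [Dop_mul_MX]⟩

lemma psi_X : psi p (RingQuot.mkAlgHom k (DiffOpRel k p) (ι k 0)) = Mop Polynomial.X := by
  simp [psi, RingQuot.liftAlgHom_mkAlgHom_apply]

lemma psi_Y : psi p (RingQuot.mkAlgHom k (DiffOpRel k p) (ι k 1)) = Dop p := by
  simp [psi, RingQuot.liftAlgHom_mkAlgHom_apply]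

lemma Mop_affine (lam kap : k) :
    lam • Mop (k := k) Polynomial.X + algebraMap k (Module.End k (Polynomial k)) kap
      = Mop (C lam * Polynomial.X + C kap) := by
  rw [map_add, map_mul, ← Polynomial.algebraMap_eq,
    AlgHom.commutes, AlgHom.commutes, Algebra.smul_def]

end Aux

/-- For `A = k[x][y;δ]` with `δ(x) = p(x)`, the assignment
`x ↦ λx + κ`, `y ↦ μy + h(x)` extends to an algebra endomorphism of `A`
if and only if `p(λx + κ) = λμ·p(x)`. -/
theorem diffOp_endomorphism_iff (k : Type*) [Field k] (p : Polynomial k)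
    (lam mu : k) (hlam : lam ≠ 0) (hmu : mu ≠ 0) (kap : k) (h : Polynomial k) :
    (∃ φ : DiffOpRing k p →ₐ[k] DiffOpRing k p,
      φ (RingQuot.mkAlgHom k (DiffOpRel k p) (ι k 0)) =
        lam • RingQuot.mkAlgHom k (DiffOpRel k p) (ι k 0) +
          algebraMap k (DiffOpRing k p) kap ∧
      φ (RingQuot.mkAlgHom k (DiffOpRel k p) (ι k 1)) =
        mu • RingQuot.mkAlgHom k (DiffOpRel k p) (ι k 1) +
          Polynomial.aeval (RingQuot.mkAlgHom k (DiffOpRel k p) (ι k 0)) h) ↔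
    p.comp (Polynomial.C lam * Polynomial.X + Polynomial.C kap) =
      (lam * mu) • p := by
  set X : DiffOpRing k p := RingQuot.mkAlgHom k (DiffOpRel k p) (ι k 0) with hX
  set Y : DiffOpRing k p := RingQuot.mkAlgHom k (DiffOpRel k p) (ι k 1) with hY
  set q : Polynomial k := C lam * Polynomial.X + C kap with hq
  have hYX : Y * X = X * Y + aeval X p := by
    have := RingQuot.mkAlgHom_rel k (DiffOpRel.rel (k := k) (p := p))
    simpa only [map_mul, map_add, ← Polynomial.aeval_algHom_apply] using this
  have hXq : lam • X + algebraMap k (DiffOpRing k p) kap = aeval X q := by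
    rw [hq, map_add, map_mul, aeval_C, aeval_C, aeval_X, Algebra.smul_def]
  have hdq : derivative q = C lam := by rw [hq]; simp
  constructor
  · rintro ⟨φ, hφX, hφY⟩
    have E := congrArg (psi p ∘ φ) hYX
    simp only [Function.comp_apply, map_mul, map_add, ← Polynomial.aeval_algHom_apply, hφX, hφY] at E
    simp only [Function.comp_apply, map_mul, map_add, hφX, hφY, map_smul,
      ← Polynomial.aeval_algHom_apply, hX, hY, psi_X, psi_Y, AlgHom.commutes,
      Mop_affine, ← hq, aeval_Mop, comp_X] at E
    have E1 := congrFun (congrArg DFunLike.coe E) (1 : Polynomial k)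
    simp only [Module.End.mul_apply, LinearMap.add_apply, LinearMap.smul_apply,
      Mop_apply, Dop_apply, mul_one, hdq, derivative_one, mul_zero,
      smul_eq_C_mul] at E1
    rw [smul_eq_C_mul, C_mul]
    linear_combination -E1
  · intro hp
    have hcomm : ∀ a : Polynomial k, Commute X (aeval X a) := by
      intro a
      simpa [aeval_X] using ((Commute.all Polynomial.X a).map (aeval X))
    have haev : aeval (lam • X + algebraMap k (DiffOpRing k p) kap) p
        = (lam * mu) • aeval X p := by
      rw [hXq, ← aeval_comp, hp, map_smul]
    have key : (mu • Y + aeval X h) * (lam • X + algebraMap k (DiffOpRing k p) kap)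
        = (lam • X + algebraMap k (DiffOpRing k p) kap) * (mu • Y + aeval X h)
          + aeval (lam • X + algebraMap k (DiffOpRing k p) kap) p := by
      rw [haev]
      simp only [mul_add, add_mul, smul_mul_assoc, mul_smul_comm,
        smul_smul, hYX, smul_add, Algebra.commutes, (hcomm h).eq, mul_comm mu lam]
      abel
    refine ⟨RingQuot.liftAlgHom k ⟨FreeAlgebra.lift k
      ![lam • X + algebraMap k (DiffOpRing k p) kap, mu • Y + aeval X h], ?_⟩, ?_, ?_⟩
    · rintro a b ⟨⟩
      simpa only [map_mul, map_add, FreeAlgebra.lift_ι_apply,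
        Matrix.cons_val_zero, Matrix.cons_val_one, Matrix.head_cons,
        ← Polynomial.aeval_algHom_apply, hX] using key
    · show (RingQuot.liftAlgHom k _) (RingQuot.mkAlgHom k (DiffOpRel k p) (ι k 0)) = _
      rw [RingQuot.liftAlgHom_mkAlgHom_apply, FreeAlgebra.lift_ι_apply]
      simp
    · show (RingQuot.liftAlgHom k _) (RingQuot.mkAlgHom k (DiffOpRel k p) (ι k 1)) = _
      rw [RingQuot.liftAlgHom_mkAlgHom_apply, FreeAlgebra.lift_ι_apply]
      simp
end
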